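/- arXiv:1311.7199 — 5 statements merged into one kernel-verified Lean document; each statement's English description precedes it below -/
import Mathlib

section
/- For positive definite n×n matrices A and B, the geometric mean A # B := A^{1/2}(A^{-1/2} B A^{-1/2})^{1/2} A^{1/2} satisfies: A # B is the maximum, in the Löwner order, of the set {X : X positive semidefinite, [[A, X],[X, B]] ≥ 0}. -/
open scoped ComplexOrder
open Matrix

/-- The `t`-th power of a Hermitian matrix, defined via the spectral decomposition
(functional calculus with the real power function). -/
noncomputable def psdPow {n : ℕ} (A : Matrix (Fin n) (Fin n) ℂ) (hA : A.IsHermitian) (t : ℝ) :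
    Matrix (Fin n) (Fin n) ℂ :=
  (hA.eigenvectorUnitary : Matrix (Fin n) (Fin n) ℂ) *
    Matrix.diagonal (fun i => ((hA.eigenvalues i ^ t : ℝ) : ℂ)) *
    (hA.eigenvectorUnitary : Matrix (Fin n) (Fin n) ℂ)ᴴ

lemma psdPow_isHermitian {n : ℕ} (A : Matrix (Fin n) (Fin n) ℂ) (hA : A.IsHermitian) (t : ℝ) :
    (psdPow A hA t).IsHermitian := by
  unfold psdPow
  apply Matrix.isHermitian_mul_mul_conjTranspose
  rw [Matrix.isHermitian_diagonal_iff]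
  intro i
  exact Complex.conj_ofReal _

lemma isHermitian_conj {n : ℕ} {C B : Matrix (Fin n) (Fin n) ℂ}
    (hC : C.IsHermitian) (hB : B.IsHermitian) : (C * B * C).IsHermitian := by
  have := Matrix.isHermitian_mul_mul_conjTranspose C hB
  rwa [hC] at this

/-- The α-weighted geometric mean `A #_α B = A^{1/2} (A^{-1/2} B A^{-1/2})^α A^{1/2}`
of Hermitian (in applications, positive definite) matrices, where `A^{-1/2} = A^{(-1/2)}`
via functional calculus. -/
noncomputable def wGeomMean {n : ℕ} (A B : Matrix (Fin n) (Fin n) ℂ)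
    (hA : A.IsHermitian) (hB : B.IsHermitian) (α : ℝ) : Matrix (Fin n) (Fin n) ℂ :=
  psdPow A hA (1/2) *
    psdPow (psdPow A hA (-(1/2)) * B * psdPow A hA (-(1/2)))
      (isHermitian_conj (psdPow_isHermitian A hA (-(1/2))) hB) α *
    psdPow A hA (1/2)

lemma wGeomMean_isHermitian {n : ℕ} (A B : Matrix (Fin n) (Fin n) ℂ)
    (hA : A.IsHermitian) (hB : B.IsHermitian) (α : ℝ) : (wGeomMean A B hA hB α).IsHermitian :=
  isHermitian_conj (psdPow_isHermitian A hA (1/2)) (psdPow_isHermitian _ _ α)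

section AuxGeomMean
variable {n : ℕ}

lemma conj_mul_conj (U D E : Matrix (Fin n) (Fin n) ℂ) (hU : Uᴴ * U = 1) :
    (U * D * Uᴴ) * (U * E * Uᴴ) = U * (D * E) * Uᴴ := by
  calc (U * D * Uᴴ) * (U * E * Uᴴ) = U * (D * ((Uᴴ * U) * (E * Uᴴ))) := by
        simp only [Matrix.mul_assoc]
    _ = U * (D * E) * Uᴴ := by rw [hU, one_mul]; simp only [Matrix.mul_assoc]

lemma psdPow_mul_psdPow {A : Matrix (Fin n) (Fin n) ℂ} (hA : A.PosDef) (s t : ℝ) :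
    psdPow A hA.1 s * psdPow A hA.1 t = psdPow A hA.1 (s + t) := by
  have hU : ((hA.1.eigenvectorUnitary : Matrix (Fin n) (Fin n) ℂ))ᴴ *
      (hA.1.eigenvectorUnitary : Matrix (Fin n) (Fin n) ℂ) = 1 := by
    simpa only [star_eq_conjTranspose] using
      Matrix.mem_unitaryGroup_iff'.mp hA.1.eigenvectorUnitary.2
  unfold psdPow
  rw [conj_mul_conj _ _ _ hU, Matrix.diagonal_mul_diagonal]
  have : (fun i => ((hA.1.eigenvalues i ^ s : ℝ) : ℂ) * ((hA.1.eigenvalues i ^ t : ℝ) : ℂ))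
      = fun i => ((hA.1.eigenvalues i ^ (s + t) : ℝ) : ℂ) := by
    funext i
    rw [← Complex.ofReal_mul, ← Real.rpow_add (hA.eigenvalues_pos i)]
  rw [this]

lemma psdPow_zero {A : Matrix (Fin n) (Fin n) ℂ} (hA : A.IsHermitian) :
    psdPow A hA 0 = 1 := by
  unfold psdPow
  have hU : (hA.eigenvectorUnitary : Matrix (Fin n) (Fin n) ℂ) *
      ((hA.eigenvectorUnitary : Matrix (Fin n) (Fin n) ℂ))ᴴ = 1 := by
    simpa only [star_eq_conjTranspose] using
      Matrix.mem_unitaryGroup_iff.mp hA.eigenvectorUnitary.2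
  simp [Real.rpow_zero, Matrix.diagonal_one, hU]

lemma psdPow_one {A : Matrix (Fin n) (Fin n) ℂ} (hA : A.IsHermitian) :
    psdPow A hA 1 = A := by
  unfold psdPow
  simp only [Real.rpow_one]
  exact (hA.spectral_theorem).symm

lemma psdPow_posSemidef {A : Matrix (Fin n) (Fin n) ℂ} (hA : A.PosDef) (t : ℝ) :
    (psdPow A hA.1 t).PosSemidef := by
  unfold psdPow
  apply Matrix.PosSemidef.mul_mul_conjTranspose_same
  apply Matrix.posSemidef_diagonal_iff.mpr
  intro i
  rw [Complex.zero_le_real]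
  exact (Real.rpow_pos_of_pos (hA.eigenvalues_pos i) t).le

lemma posDef_conj_of_isUnit {M N : Matrix (Fin n) (Fin n) ℂ} (hM : M.PosDef)
    (hN : IsUnit N) : (N * M * Nᴴ).PosDef := by
  refine Matrix.PosDef.of_dotProduct_mulVec_pos (Matrix.isHermitian_mul_mul_conjTranspose _ hM.1) fun x hx => ?_
  have hNH : IsUnit Nᴴ := by
    rw [← Matrix.star_eq_conjTranspose]
    exact hN.star
  have hx' : Nᴴ *ᵥ x ≠ 0 := by
    intro h
    apply hx
    have hinj : Function.Injective (Nᴴ).mulVec := Matrix.mulVec_injective_iff_isUnit.mpr hNH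
    have : Nᴴ *ᵥ x = Nᴴ *ᵥ 0 := by simpa using h
    exact hinj this
  have key := hM.dotProduct_mulVec_pos hx'
  simpa only [star_mulVec, dotProduct_mulVec, vecMul_vecMul, conjTranspose_conjTranspose,
    Matrix.mul_assoc] using key

lemma sub_posSemidef_of_sq_sub_sq {S Y : Matrix (Fin n) (Fin n) ℂ}
    (hS : S.PosSemidef) (hY : Y.PosSemidef) (h : (S * S - Y * Y).PosSemidef) :
    (S - Y).PosSemidef := by
  have hT : (S - Y).IsHermitian := hS.1.sub hY.1
  apply hT.posSemidef_iff_eigenvalues_nonneg.mpr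
  intro i
  rw [Pi.zero_apply]
  by_contra hneg
  push_neg at hneg
  set μ : ℝ := hT.eigenvalues i with hμ
  set v : (Fin n) → ℂ := ⇑(hT.eigenvectorBasis i) with hv
  have hv0 : v ≠ 0 := by
    rw [hv]
    exact fun h => hT.eigenvectorBasis.orthonormal.ne_zero i (by simpa using congrArg (WithLp.toLp 2) h)
  have hTv : (S - Y) *ᵥ v = (μ : ℂ) • v := by
    have := hT.mulVec_eigenvectorBasis i
    rw [← hμ, ← hv] at this
    rw [this]
    funext j
    simp [Pi.smul_apply, Complex.real_smul]
  set qS : ℂ := star v ⬝ᵥ S *ᵥ v with hqS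
  set qY : ℂ := star v ⬝ᵥ Y *ᵥ v with hqY
  have hsplit : S * S - Y * Y = S * (S - Y) + (S - Y) * Y := by noncomm_ring
  have hterm1 : star v ⬝ᵥ (S * (S - Y)) *ᵥ v = (μ : ℂ) * qS := by
    rw [← Matrix.mulVec_mulVec, hTv, Matrix.mulVec_smul, dotProduct_smul]
    simp [hqS]
  have hvT : star v ᵥ* (S - Y) = (μ : ℂ) • star v := by
    have h1 : star ((S - Y) *ᵥ v) = star v ᵥ* (S - Y)ᴴ := star_mulVec _ _
    rw [hT.eq, hTv] at h1
    rw [← h1]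
    funext j
    simp [Pi.smul_apply, Complex.real_smul]
  have hterm2 : star v ⬝ᵥ ((S - Y) * Y) *ᵥ v = (μ : ℂ) * qY := by
    rw [← Matrix.mulVec_mulVec, dotProduct_mulVec, hvT, smul_dotProduct]
    simp [hqY, dotProduct_mulVec]
  have key : (0 : ℂ) ≤ (μ : ℂ) * (qS + qY) := by
    have := h.dotProduct_mulVec_nonneg v
    rwa [hsplit, Matrix.add_mulVec, dotProduct_add, hterm1, hterm2, ← mul_add] at this
  have hqSnn : (0 : ℂ) ≤ qS := hS.dotProduct_mulVec_nonneg v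
  have hqYnn : (0 : ℂ) ≤ qY := hY.dotProduct_mulVec_nonneg v
  have hqnn : (0 : ℂ) ≤ qS + qY := add_nonneg hqSnn hqYnn
  -- deduce qS + qY = 0
  have him : (qS + qY).im = 0 := ((Complex.le_def.mp hqnn).2).symm
  have hre : 0 ≤ (qS + qY).re := (Complex.le_def.mp hqnn).1
  have hμre : 0 ≤ ((μ : ℂ) * (qS + qY)).re := (Complex.le_def.mp key).1
  have hmulre : ((μ : ℂ) * (qS + qY)).re = μ * (qS + qY).re := by
    simp [Complex.mul_re, him]
  rw [hmulre] at hμre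
  have hq0 : (qS + qY).re = 0 := le_antisymm (by nlinarith) hre
  have hsum0 : qS + qY = 0 := by
    apply Complex.ext <;> simp [hq0, him]
  have hboth : qS = 0 ∧ qY = 0 := (add_eq_zero_iff_of_nonneg hqSnn hqYnn).mp hsum0
  have hSv : S *ᵥ v = 0 := (hS.dotProduct_mulVec_zero_iff v).mp hboth.1
  have hYv : Y *ᵥ v = 0 := (hY.dotProduct_mulVec_zero_iff v).mp hboth.2
  have : (μ : ℂ) • v = 0 := by
    rw [← hTv, Matrix.sub_mulVec, hSv, hYv, sub_zero]
  rcases smul_eq_zero.mp this with h' | h'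
  · exact absurd (Complex.ofReal_eq_zero.mp h') hneg.ne
  · exact hv0 h'

end AuxGeomMean

/-- For positive definite matrices `A`, `B`, the geometric mean
`A # B = A^{1/2}(A^{-1/2} B A^{-1/2})^{1/2} A^{1/2}` is the maximum, in the Löwner order, of
the set of positive semidefinite `X` with `[[A, X],[X, B]] ≥ 0`. -/


theorem geomMean_is_max {n : ℕ} (A B : Matrix (Fin n) (Fin n) ℂ)
    (hA : A.PosDef) (hB : B.PosDef) :
    (wGeomMean A B hA.1 hB.1 (1/2)).PosSemidef ∧
    (Matrix.fromBlocks A (wGeomMean A B hA.1 hB.1 (1/2))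
      (wGeomMean A B hA.1 hB.1 (1/2)) B).PosSemidef ∧
    ∀ X : Matrix (Fin n) (Fin n) ℂ, X.PosSemidef →
      (Matrix.fromBlocks A X X B).PosSemidef →
      (wGeomMean A B hA.1 hB.1 (1/2) - X).PosSemidef := by
  set S := psdPow A hA.1 (1/2) with hSdef
  set Sm := psdPow A hA.1 (-(1/2)) with hSmdef
  set C := Sm * B * Sm with hCdef
  have hSH : S.IsHermitian := psdPow_isHermitian _ _ _
  have hSmH : Sm.IsHermitian := psdPow_isHermitian _ _ _
  have hSSm : S * Sm = 1 := by
    rw [hSdef, hSmdef, psdPow_mul_psdPow hA]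
    norm_num [psdPow_zero]
  have hSmS : Sm * S = 1 := by
    rw [hSdef, hSmdef, psdPow_mul_psdPow hA]
    norm_num [psdPow_zero]
  have hAinv : A⁻¹ = Sm * Sm := by
    apply Matrix.inv_eq_left_inv
    have : Sm * Sm * A = psdPow A hA.1 (-(1/2) + -(1/2) + 1) := by
      conv_lhs => rw [show A = psdPow A hA.1 1 from (psdPow_one hA.1).symm]
      rw [hSmdef, psdPow_mul_psdPow hA, psdPow_mul_psdPow hA]
    rw [this]
    norm_num [psdPow_zero]
  have hSmUnit : IsUnit Sm := ⟨⟨Sm, S, hSmS, hSSm⟩, rfl⟩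
  have hC : C.PosDef := by
    have := posDef_conj_of_isUnit hB hSmUnit
    rwa [hSmH.eq] at this
  set R := psdPow C hC.1 (1/2) with hRdef
  have hG : wGeomMean A B hA.1 hB.1 (1/2) = S * R * S := rfl
  have hRR : R * R = C := by
    rw [hRdef, psdPow_mul_psdPow hC]
    norm_num [psdPow_one]
  have hRpsd : R.PosSemidef := psdPow_posSemidef hC _
  have hGpsd : (S * R * S).PosSemidef := by
    have := hRpsd.mul_mul_conjTranspose_same S
    rwa [hSH.eq] at this
  have hGH : (S * R * S).IsHermitian := hGpsd.1
  haveI : Invertible A := hA.isUnit.invertible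
  refine ⟨hG ▸ hGpsd, ?_, ?_⟩
  · rw [hG]
    rw [show fromBlocks A (S*R*S) (S*R*S) B = fromBlocks A (S*R*S) (S*R*S)ᴴ B by rw [hGH.eq]]
    rw [Matrix.PosDef.fromBlocks₁₁ _ _ hA]
    rw [hGH.eq, hAinv]
    have : S * R * S * (Sm * Sm) * (S * R * S) = B := by
      simp only [Matrix.mul_assoc]
      rw [show Sm * (S * (R * S)) = R * S by rw [← Matrix.mul_assoc, hSmS, one_mul]]
      rw [show S * (Sm * (R * S)) = R * S by rw [← Matrix.mul_assoc, hSSm, one_mul]]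
      rw [show R * (R * S) = C * S by rw [← Matrix.mul_assoc, hRR]]
      rw [hCdef]
      simp only [Matrix.mul_assoc]
      rw [hSmS, Matrix.mul_one, ← Matrix.mul_assoc, hSSm, one_mul]
    rw [this, sub_self]
    exact Matrix.PosSemidef.zero
  · intro X hX hbl
    rw [show fromBlocks A X X B = fromBlocks A X Xᴴ B by rw [hX.1.eq]] at hbl
    have h1 : (B - Xᴴ * A⁻¹ * X).PosSemidef :=
      (Matrix.PosDef.fromBlocks₁₁ _ _ hA).mp hbl
    rw [hX.1.eq, hAinv] at h1
    set Y := Sm * X * Sm with hYdef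
    have hYpsd : Y.PosSemidef := by
      have := hX.mul_mul_conjTranspose_same Sm
      rwa [hSmH.eq] at this
    have hYY : Y * Y = Sm * (X * (Sm * Sm) * X) * Sm := by
      rw [hYdef]
      simp only [Matrix.mul_assoc]
    have h2 : (R * R - Y * Y).PosSemidef := by
      have h2' := h1.mul_mul_conjTranspose_same Sm
      rw [hSmH.eq, Matrix.mul_sub, Matrix.sub_mul] at h2'
      rw [hRR, hCdef, hYY]
      exact h2'
    have h3 : (R - Y).PosSemidef := sub_posSemidef_of_sq_sub_sq hRpsd hYpsd h2
    have h4 := h3.mul_mul_conjTranspose_same S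
    rw [hSH.eq] at h4
    have hSYS : S * Y * S = X := by
      rw [hYdef]
      simp only [Matrix.mul_assoc]
      rw [hSmS, Matrix.mul_one, ← Matrix.mul_assoc, hSSm, one_mul]
    have h5 : S * (R - Y) * S = S * R * S - X := by
      rw [Matrix.mul_sub, Matrix.sub_mul, hSYS]
    rw [hG]
    rwa [h5] at h4
end

section
/- For positive definite matrices A and B, the geometric mean A # B = A^{1/2}(A^{-1/2} B A^{-1/2})^{1/2} A^{1/2} is symmetric: A # B = B # A. -/
open scoped ComplexOrder
open Matrix

section Aux

variable {n : ℕ}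

lemma unitary_conjT_mul {U : Matrix.unitaryGroup (Fin n) ℂ} :
    (U : Matrix (Fin n) (Fin n) ℂ)ᴴ * (U : Matrix (Fin n) (Fin n) ℂ) = 1 := by
  simpa [Matrix.star_eq_conjTranspose] using U.2.1

lemma unitary_mul_conjT {U : Matrix.unitaryGroup (Fin n) ℂ} :
    (U : Matrix (Fin n) (Fin n) ℂ) * (U : Matrix (Fin n) (Fin n) ℂ)ᴴ = 1 := by
  simpa [Matrix.star_eq_conjTranspose] using U.2.2

lemma posDef_conj {M C : Matrix (Fin n) (Fin n) ℂ} (hM : M.PosDef) (hC : IsUnit C) :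
    (C * M * Cᴴ).PosDef := by
  refine Matrix.PosDef.of_dotProduct_mulVec_pos (Matrix.isHermitian_mul_mul_conjTranspose C hM.1) fun x hx => ?_
  have hCH : IsUnit Cᴴ := by
    rw [← Matrix.star_eq_conjTranspose]; exact hC.star
  have hx' : Cᴴ *ᵥ x ≠ 0 := by
    have hinj : Function.Injective (Cᴴ.mulVec) :=
      Matrix.mulVec_injective_iff_isUnit.2 hCH
    intro h
    exact hx (hinj (by simpa using h))
  have hstar : star (Cᴴ *ᵥ x) = star x ᵥ* C := by
    rw [Matrix.star_mulVec, Matrix.conjTranspose_conjTranspose]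
  have h2 := hM.dotProduct_mulVec_pos hx'
  rw [hstar] at h2
  rw [← Matrix.mulVec_mulVec, ← Matrix.mulVec_mulVec, Matrix.dotProduct_mulVec]
  exact h2

lemma psdPow_posDef {A : Matrix (Fin n) (Fin n) ℂ} (hA : A.PosDef) (t : ℝ) :
    (psdPow A hA.1 t).PosDef := by
  unfold psdPow
  apply posDef_conj
  · rw [Matrix.posDef_diagonal_iff]
    intro i
    exact_mod_cast Real.rpow_pos_of_pos (hA.eigenvalues_pos i) t
  · exact (Unitary.toUnits hA.1.eigenvectorUnitary).isUnit

lemma posDef_conj_herm {M C : Matrix (Fin n) (Fin n) ℂ} (hM : M.PosDef) (hC : C.PosDef) :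
    (C * M * C).PosDef := by
  have := posDef_conj hM hC.isUnit
  rwa [hC.1.eq] at this

lemma wGeomMean_posDef {A B : Matrix (Fin n) (Fin n) ℂ} (hA : A.PosDef) (hB : B.PosDef)
    (α : ℝ) : (wGeomMean A B hA.1 hB.1 α).PosDef := by
  unfold wGeomMean
  have hC : (psdPow A hA.1 (-(1/2)) * B * psdPow A hA.1 (-(1/2))).PosDef :=
    posDef_conj_herm hB (psdPow_posDef hA _)
  have hCp : (psdPow (psdPow A hA.1 (-(1/2)) * B * psdPow A hA.1 (-(1/2)))
      (isHermitian_conj (psdPow_isHermitian A hA.1 (-(1/2))) hB.1) α).PosDef :=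
    psdPow_posDef hC α
  exact posDef_conj_herm hCp (psdPow_posDef hA _)

lemma key_eq {A B : Matrix (Fin n) (Fin n) ℂ} (hA : A.PosDef) (hB : B.PosDef) :
    wGeomMean A B hA.1 hB.1 (1/2) *
      (psdPow A hA.1 (-(1/2)) * psdPow A hA.1 (-(1/2))) *
      wGeomMean A B hA.1 hB.1 (1/2) = B := by
  set S := psdPow A hA.1 (1/2) with hS
  set T := psdPow A hA.1 (-(1/2)) with hT
  have hST : S * T = 1 := by
    rw [hS, hT, psdPow_mul_psdPow hA]
    norm_num
    exact psdPow_zero hA.1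
  have hTS : T * S = 1 := by
    rw [hS, hT, psdPow_mul_psdPow hA]
    norm_num
    exact psdPow_zero hA.1
  set C := T * B * T with hCdef
  have hCpd : C.PosDef := posDef_conj_herm hB (psdPow_posDef hA _)
  set hCh := isHermitian_conj (psdPow_isHermitian A hA.1 (-(1/2))) hB.1 with hCh_def
  set R := psdPow C hCh (1/2) with hR
  have hRR : R * R = C := by
    rw [hR]
    have : psdPow C hCh (1/2) = psdPow C hCpd.1 (1/2) := rfl
    rw [this, psdPow_mul_psdPow hCpd]
    norm_num
    exact psdPow_one _
  have hG : wGeomMean A B hA.1 hB.1 (1/2) = S * R * S := rfl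
  rw [hG]
  have e1 : ∀ M : Matrix (Fin n) (Fin n) ℂ, S * (T * M) = M := by
    intro M; rw [← Matrix.mul_assoc, hST, Matrix.one_mul]
  have e2 : ∀ M : Matrix (Fin n) (Fin n) ℂ, T * (S * M) = M := by
    intro M; rw [← Matrix.mul_assoc, hTS, Matrix.one_mul]
  have e3 : ∀ M : Matrix (Fin n) (Fin n) ℂ, R * (R * M) = C * M := by
    intro M; rw [← Matrix.mul_assoc, hRR]
  calc S * R * S * (T * T) * (S * R * S)
      = S * (R * (S * (T * (T * (S * (R * S)))))) := by
        simp only [Matrix.mul_assoc]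
    _ = S * (R * (R * S)) := by rw [e1, e2]
    _ = S * (C * S) := by rw [e3]
    _ = S * (T * (B * (T * S))) := by simp only [hCdef, Matrix.mul_assoc]
    _ = B := by rw [e1, hTS, Matrix.mul_one]

end Aux

/-- The geometric mean of positive definite matrices is symmetric: `A # B = B # A`. -/
theorem geomMean_comm {n : ℕ} (A B : Matrix (Fin n) (Fin n) ℂ)
    (hA : A.PosDef) (hB : B.PosDef) :
    wGeomMean A B hA.1 hB.1 (1/2) = wGeomMean B A hB.1 hA.1 (1/2) := by
  set X := wGeomMean A B hA.1 hB.1 (1/2) with hXdef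
  set Y := wGeomMean B A hB.1 hA.1 (1/2) with hYdef
  set S := psdPow A hA.1 (1/2) with hSdef
  set T := psdPow A hA.1 (-(1/2)) with hTdef
  set TB := psdPow B hB.1 (-(1/2)) with hTBdef
  have hXpd : X.PosDef := wGeomMean_posDef hA hB _
  have hYpd : Y.PosDef := wGeomMean_posDef hB hA _
  have hX : X * (T * T) * X = B := key_eq hA hB
  have hY : Y * (TB * TB) * Y = A := key_eq hB hA
  have hST : S * T = 1 := by
    rw [hSdef, hTdef, psdPow_mul_psdPow hA]
    norm_num
    exact psdPow_zero hA.1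
  have hTS : T * S = 1 := by
    rw [hSdef, hTdef, psdPow_mul_psdPow hA]
    norm_num
    exact psdPow_zero hA.1
  -- T * T is the inverse of A
  have hTTA : (T * T) * A = 1 := by
    rw [hTdef, psdPow_mul_psdPow hA]
    norm_num
    have e : psdPow A hA.1 (-1) * A = psdPow A hA.1 (-1) * psdPow A hA.1 1 := by
      rw [psdPow_one]
    rw [e, psdPow_mul_psdPow hA]
    norm_num
    exact psdPow_zero hA.1
  have hTBB : (TB * TB) * B = 1 := by
    rw [hTBdef, psdPow_mul_psdPow hB]
    norm_num
    have e : psdPow B hB.1 (-1) * B = psdPow B hB.1 (-1) * psdPow B hB.1 1 := by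
      rw [psdPow_one]
    rw [e, psdPow_mul_psdPow hB]
    norm_num
    exact psdPow_zero hB.1
  have hAinv : A⁻¹ = T * T := Matrix.inv_eq_left_inv hTTA
  have hBinv : B⁻¹ = TB * TB := Matrix.inv_eq_left_inv hTBB
  have hYdet : IsUnit Y.det := (Matrix.isUnit_iff_isUnit_det _).1 hYpd.isUnit
  have hBdet : IsUnit B.det := (Matrix.isUnit_iff_isUnit_det _).1 hB.isUnit
  -- From Y * B⁻¹ * Y = A, deduce A⁻¹ = Y⁻¹ * B * Y⁻¹
  have hY' : Y * B⁻¹ * Y = A := by rw [hBinv]; exact hY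
  have hAinv' : A⁻¹ = Y⁻¹ * B * Y⁻¹ := by
    rw [← hY', Matrix.mul_inv_rev, Matrix.mul_inv_rev,
      Matrix.nonsing_inv_nonsing_inv _ hBdet, Matrix.mul_assoc]
  -- hence Y * A⁻¹ * Y = B
  have hY2 : Y * (T * T) * Y = B := by
    rw [← hAinv, hAinv']
    calc Y * (Y⁻¹ * B * Y⁻¹) * Y = (Y * Y⁻¹) * B * (Y⁻¹ * Y) := by
          simp only [Matrix.mul_assoc]
      _ = B := by
          rw [Matrix.mul_nonsing_inv _ hYdet, Matrix.nonsing_inv_mul _ hYdet,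
            Matrix.one_mul, Matrix.mul_one]
  -- uniqueness of the positive square root
  have hTpd : T.PosDef := psdPow_posDef hA _
  have hP : (T * X * T).PosDef := posDef_conj_herm hXpd hTpd
  have hQ : (T * Y * T).PosDef := posDef_conj_herm hYpd hTpd
  have hsq : (T * X * T) ^ 2 = (T * Y * T) ^ 2 := by
    have e1 : (T * X * T) ^ 2 = T * (X * (T * T) * X) * T := by
      rw [pow_two]; simp only [Matrix.mul_assoc]
    have e2 : (T * Y * T) ^ 2 = T * (Y * (T * T) * Y) * T := by
      rw [pow_two]; simp only [Matrix.mul_assoc]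
    rw [e1, e2, hX, hY2]
  have hPQ : T * X * T = T * Y * T :=
    by open scoped MatrixOrder Matrix.Norms.L2Operator in
      exact (CFC.sq_eq_sq_iff _ _ hP.posSemidef.nonneg hQ.posSemidef.nonneg).1 hsq
  have recover : ∀ M : Matrix (Fin n) (Fin n) ℂ, S * (T * M * T) * S = M := by
    intro M
    calc S * (T * M * T) * S = (S * T) * M * (T * S) := by simp only [Matrix.mul_assoc]
      _ = M := by rw [hST, hTS, Matrix.one_mul, Matrix.mul_one]
  calc X = S * (T * X * T) * S := (recover X).symm
    _ = S * (T * Y * T) * S := by rw [hPQ]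
    _ = Y := recover Y
end

section
/- For all positive semidefinite n×n matrices A and B and all 0 ≤ t ≤ 1, the operator norm satisfies ‖(A+B)^t‖ ≤ ‖A^t + B^t‖. -/
open scoped ComplexOrder Matrix.Norms.L2Operator
open Matrix

/- ### Auxiliary lemmas -/

lemma norm_conj_unitary {n : ℕ} (U : Matrix.unitaryGroup (Fin n) ℂ) (D : Matrix (Fin n) (Fin n) ℂ) :
    ‖(U : Matrix (Fin n) (Fin n) ℂ) * D * star (U : Matrix (Fin n) (Fin n) ℂ)‖ = ‖D‖ := by
  rw [mul_assoc, CStarRing.norm_coe_unitary_mul, ← Unitary.coe_star,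
    CStarRing.norm_mul_coe_unitary]

lemma l2_opNorm_diagonal_le {n : ℕ} (d : Fin n → ℂ) (c : ℝ) (hc : 0 ≤ c)
    (hd : ∀ i, ‖d i‖ ≤ c) : ‖Matrix.diagonal d‖ ≤ c := by
  rw [Matrix.l2_opNorm_def]
  apply ContinuousLinearMap.opNorm_le_bound _ hc
  intro x
  have hx : (Matrix.toEuclideanLin.trans LinearMap.toContinuousLinearMap (Matrix.diagonal d)) x
      = (WithLp.equiv 2 (Fin n → ℂ)).symm (Matrix.diagonal d *ᵥ (WithLp.equiv 2 (Fin n → ℂ) x)) := rfl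
  rw [hx]
  rw [EuclideanSpace.norm_eq, EuclideanSpace.norm_eq]
  rw [← Real.sqrt_sq hc, ← Real.sqrt_mul (by positivity)]
  apply Real.sqrt_le_sqrt
  rw [Finset.mul_sum]
  apply Finset.sum_le_sum
  intro i _
  have : (WithLp.equiv 2 (Fin n → ℂ)).symm (Matrix.diagonal d *ᵥ (WithLp.equiv 2 (Fin n → ℂ) x)) i
      = d i * x i := by
    simp [Matrix.mulVec_diagonal]
  rw [this]
  rw [norm_mul, mul_pow]
  exact mul_le_mul_of_nonneg_right (pow_le_pow_left₀ (norm_nonneg _) (hd i) 2) (by positivity)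

lemma rayleigh_le_norm {n : ℕ} (X : Matrix (Fin n) (Fin n) ℂ)
    (v : EuclideanSpace ℂ (Fin n)) (hv : ‖v‖ = 1) :
    RCLike.re (dotProduct (star ⇑v) (X *ᵥ ⇑v)) ≤ ‖X‖ := by
  have h : dotProduct (star ⇑v) (X *ᵥ ⇑v)
      = inner (𝕜 := ℂ) v ((EuclideanSpace.equiv (Fin n) ℂ).symm (X *ᵥ ⇑v)) := by
    rw [EuclideanSpace.inner_eq_star_dotProduct]; exact dotProduct_comm _ _
  rw [h]
  calc RCLike.re (inner (𝕜 := ℂ) v ((EuclideanSpace.equiv (Fin n) ℂ).symm (X *ᵥ ⇑v)))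
      ≤ ‖(inner (𝕜 := ℂ) v ((EuclideanSpace.equiv (Fin n) ℂ).symm (X *ᵥ ⇑v)) : ℂ)‖ :=
        RCLike.re_le_norm _
    _ ≤ ‖v‖ * ‖(EuclideanSpace.equiv (Fin n) ℂ).symm (X *ᵥ ⇑v)‖ := norm_inner_le_norm _ _
    _ ≤ 1 * (‖X‖ * 1) := by
        rw [hv, one_mul]
        simpa [hv] using Matrix.l2_opNorm_mulVec X v
    _ = ‖X‖ := by ring

lemma norm_le_of_eigenvalues_le {n : ℕ} (X : Matrix (Fin n) (Fin n) ℂ) (hX : X.IsHermitian)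
    (c : ℝ) (hc : 0 ≤ c) (h : ∀ i, |hX.eigenvalues i| ≤ c) : ‖X‖ ≤ c := by
  conv_lhs => rw [hX.spectral_theorem]
  rw [Unitary.conjStarAlgAut_apply, norm_conj_unitary]
  refine l2_opNorm_diagonal_le _ c hc fun i => ?_
  simpa using h i

lemma scalar_ineq {a lam t : ℝ} (ha : 0 ≤ a) (halam : a ≤ lam)
    (ht₁ : t ≤ 1) : lam ^ (t - 1) * a ≤ a ^ t := by
  rcases eq_or_lt_of_le ha with h | h
  · rw [← h, mul_zero]
    exact Real.rpow_nonneg le_rfl t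
  · have h1 : lam ^ (t - 1) ≤ a ^ (t - 1) :=
      Real.rpow_le_rpow_of_nonpos h halam (by linarith)
    calc lam ^ (t - 1) * a ≤ a ^ (t - 1) * a := mul_le_mul_of_nonneg_right h1 ha
      _ = a ^ t := by rw [← Real.rpow_add_one h.ne', sub_add_cancel]

lemma psdPow_sub_posSemidef {n : ℕ} (A : Matrix (Fin n) (Fin n) ℂ) (hA : A.PosSemidef)
    (t lam : ℝ) (ht₁ : t ≤ 1) (hle : ∀ i, hA.1.eigenvalues i ≤ lam) :
    (psdPow A hA.1 t - (((lam ^ (t - 1) : ℝ) : ℂ)) • A).PosSemidef := by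
  set c : ℂ := ((lam ^ (t - 1) : ℝ) : ℂ) with hc
  set U := hA.1.eigenvectorUnitary with hU
  have e1 : psdPow A hA.1 t - c • A
      = (U : Matrix (Fin n) (Fin n) ℂ) *
          Matrix.diagonal (fun i => ((hA.1.eigenvalues i ^ t : ℝ) : ℂ))
          * star (U : Matrix (Fin n) (Fin n) ℂ)
        - c • ((U : Matrix (Fin n) (Fin n) ℂ) *
          Matrix.diagonal (RCLike.ofReal ∘ hA.1.eigenvalues)
          * star (U : Matrix (Fin n) (Fin n) ℂ)) := by
    rw [hU, ← Unitary.conjStarAlgAut_apply (S := ℂ) (u := hA.1.eigenvectorUnitary) (x := diagonal (RCLike.ofReal ∘ hA.1.eigenvalues)), ← hA.1.spectral_theorem]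
    simp only [psdPow, Matrix.star_eq_conjTranspose]
  have e2 : psdPow A hA.1 t - c • A
      = (U : Matrix (Fin n) (Fin n) ℂ) *
          Matrix.diagonal (fun i => ((hA.1.eigenvalues i ^ t : ℝ) : ℂ) - c * (hA.1.eigenvalues i : ℂ))
          * star (U : Matrix (Fin n) (Fin n) ℂ) := by
    rw [e1]
    have e3 : c • ((U : Matrix (Fin n) (Fin n) ℂ) *
          Matrix.diagonal (RCLike.ofReal ∘ hA.1.eigenvalues)
          * star (U : Matrix (Fin n) (Fin n) ℂ))
        = (U : Matrix (Fin n) (Fin n) ℂ) *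
          Matrix.diagonal (c • (RCLike.ofReal ∘ hA.1.eigenvalues))
          * star (U : Matrix (Fin n) (Fin n) ℂ) := by
      rw [Matrix.diagonal_smul, ← smul_mul_assoc, ← mul_smul_comm]
    rw [e3, ← Matrix.sub_mul, ← Matrix.mul_sub, Matrix.diagonal_sub]
    congr 2
  rw [e2, Matrix.star_eq_conjTranspose]
  apply Matrix.PosSemidef.mul_mul_conjTranspose_same
  rw [Matrix.posSemidef_diagonal_iff]
  intro i
  have h1 : ((hA.1.eigenvalues i ^ t : ℝ) : ℂ) - c * (hA.1.eigenvalues i : ℂ)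
      = (((hA.1.eigenvalues i ^ t - lam ^ (t - 1) * hA.1.eigenvalues i : ℝ)) : ℂ) := by
    rw [hc]; push_cast; ring
  rw [h1]
  rw [Complex.zero_le_real]
  have := scalar_ineq (hA.eigenvalues_nonneg i) (hle i) ht₁
  linarith

lemma psdPow_rayleigh_ge {n : ℕ} (A : Matrix (Fin n) (Fin n) ℂ) (hA : A.PosSemidef)
    (t lam : ℝ) (ht₁ : t ≤ 1) (hle : ∀ i, hA.1.eigenvalues i ≤ lam) (x : Fin n → ℂ) :
    lam ^ (t - 1) * RCLike.re (dotProduct (star x) (A *ᵥ x))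
      ≤ RCLike.re (dotProduct (star x) (psdPow A hA.1 t *ᵥ x)) := by
  have h := (psdPow_sub_posSemidef A hA t lam ht₁ hle).re_dotProduct_nonneg x
  rw [Matrix.sub_mulVec, dotProduct_sub, map_sub, Matrix.smul_mulVec,
    dotProduct_smul, smul_eq_mul] at h
  have h2 : RCLike.re ((((lam ^ (t - 1) : ℝ) : ℂ)) * (dotProduct (star x) (A *ᵥ x)))
      = lam ^ (t - 1) * RCLike.re (dotProduct (star x) (A *ᵥ x)) := by
    simp [RCLike.re_to_complex]
  rw [h2] at h
  linarith

lemma psdPow_zero_eq_one {n : ℕ} (X : Matrix (Fin n) (Fin n) ℂ) (hX : X.IsHermitian) :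
    psdPow X hX 0 = 1 := by
  unfold psdPow
  have h1 : (fun i => ((hX.eigenvalues i ^ (0:ℝ) : ℝ) : ℂ)) = fun _ => (1 : ℂ) := by
    funext i
    rw [Real.rpow_zero]
    norm_num
  rw [h1, Matrix.diagonal_one, mul_one, ← Matrix.star_eq_conjTranspose]
  exact Unitary.coe_mul_star_self hX.eigenvectorUnitary

/-- For positive semidefinite matrices `A, B` and `0 ≤ t ≤ 1`, the operator norm satisfies
`‖(A+B)^t‖ ≤ ‖A^t + B^t‖`. -/
theorem opNorm_add_rpow_le {n : ℕ} (A B : Matrix (Fin n) (Fin n) ℂ)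
    (hA : A.PosSemidef) (hB : B.PosSemidef) (t : ℝ) (ht₀ : 0 ≤ t) (ht₁ : t ≤ 1) :
    ‖psdPow (A + B) (hA.1.add hB.1) t‖ ≤ ‖psdPow A hA.1 t + psdPow B hB.1 t‖ := by
  rcases eq_or_lt_of_le ht₀ with rfl | ht₀'
  · -- t = 0 : both powers are the identity
    rw [psdPow_zero_eq_one, psdPow_zero_eq_one, psdPow_zero_eq_one]
    have h2 : ((1 : Matrix (Fin n) (Fin n) ℂ) + 1) = (2 : ℝ) • (1 : Matrix (Fin n) (Fin n) ℂ) := by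
      rw [two_smul]
    rw [h2, norm_smul]
    have := norm_nonneg (1 : Matrix (Fin n) (Fin n) ℂ)
    rw [Real.norm_ofNat]
    linarith
  rcases Nat.eq_zero_or_pos n with hn | hn
  · subst hn
    exact le_of_eq (congrArg norm (Subsingleton.elim _ _))
  haveI : Nonempty (Fin n) := Fin.pos_iff_nonempty.mp hn
  have hM : (A + B).PosSemidef := hA.add hB
  have hMh : (A + B).IsHermitian := hA.1.add hB.1
  obtain ⟨j, hj⟩ := Finite.exists_max hMh.eigenvalues
  set lam := hMh.eigenvalues j with hlam_def
  have hlam0 : 0 ≤ lam := hM.eigenvalues_nonneg j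
  -- upper bound for the left side
  have hLHS : ‖psdPow (A + B) hMh t‖ ≤ lam ^ t := by
    unfold psdPow
    rw [← Matrix.star_eq_conjTranspose, norm_conj_unitary]
    refine l2_opNorm_diagonal_le _ _ (Real.rpow_nonneg hlam0 t) fun i => ?_
    have h1 : ‖((hMh.eigenvalues i ^ t : ℝ) : ℂ)‖ = |hMh.eigenvalues i ^ t| := by
      simp
    rw [h1, abs_of_nonneg (Real.rpow_nonneg (hM.eigenvalues_nonneg i) t)]
    exact Real.rpow_le_rpow (hM.eigenvalues_nonneg i) (hj i) ht₀
  rcases eq_or_lt_of_le hlam0 with hlam0' | hlam0'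
  · -- lam = 0 : left side is zero
    refine le_trans hLHS ?_
    rw [← hlam0', Real.zero_rpow ht₀'.ne']
    exact norm_nonneg _
  -- main case : lam > 0
  have hnormM : ‖A + B‖ ≤ lam :=
    norm_le_of_eigenvalues_le _ hMh lam hlam0 fun i => by
      rw [abs_of_nonneg (hM.eigenvalues_nonneg i)]; exact hj i
  -- all eigenvalues of A and B are at most lam
  have hAev : ∀ i, hA.1.eigenvalues i ≤ lam := by
    intro i
    set w := hA.1.eigenvectorBasis i with hw_def
    have hw : ‖w‖ = 1 := hA.1.eigenvectorBasis.orthonormal.1 i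
    have h1 : hA.1.eigenvalues i
        = RCLike.re (dotProduct (star ⇑w) (A *ᵥ ⇑w)) := hA.1.eigenvalues_eq i
    have h2 : RCLike.re (dotProduct (star ⇑w) ((A + B) *ᵥ ⇑w)) ≤ ‖A + B‖ :=
      rayleigh_le_norm _ w hw
    have h3 : (0:ℝ) ≤ RCLike.re (dotProduct (star ⇑w) (B *ᵥ ⇑w)) :=
      hB.re_dotProduct_nonneg _
    rw [Matrix.add_mulVec, dotProduct_add, map_add] at h2
    rw [h1]
    linarith
  have hBev : ∀ i, hB.1.eigenvalues i ≤ lam := by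
    intro i
    set w := hB.1.eigenvectorBasis i with hw_def
    have hw : ‖w‖ = 1 := hB.1.eigenvectorBasis.orthonormal.1 i
    have h1 : hB.1.eigenvalues i
        = RCLike.re (dotProduct (star ⇑w) (B *ᵥ ⇑w)) := hB.1.eigenvalues_eq i
    have h2 : RCLike.re (dotProduct (star ⇑w) ((A + B) *ᵥ ⇑w)) ≤ ‖A + B‖ :=
      rayleigh_le_norm _ w hw
    have h3 : (0:ℝ) ≤ RCLike.re (dotProduct (star ⇑w) (A *ᵥ ⇑w)) :=
      hA.re_dotProduct_nonneg _
    rw [Matrix.add_mulVec, dotProduct_add, map_add] at h2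
    rw [h1]
    linarith
  -- the top eigenvector of A + B
  set v := hMh.eigenvectorBasis j with hv_def
  have hv : ‖v‖ = 1 := hMh.eigenvectorBasis.orthonormal.1 j
  have hMv : RCLike.re (dotProduct (star ⇑v) ((A + B) *ᵥ ⇑v)) = lam :=
    (hMh.eigenvalues_eq j).symm
  have h1 := psdPow_rayleigh_ge A hA t lam ht₁ hAev ⇑v
  have h2 := psdPow_rayleigh_ge B hB t lam ht₁ hBev ⇑v
  have h4 : RCLike.re (dotProduct (star ⇑v)
      ((psdPow A hA.1 t + psdPow B hB.1 t) *ᵥ ⇑v)) ≤ ‖psdPow A hA.1 t + psdPow B hB.1 t‖ :=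
    rayleigh_le_norm _ v hv
  rw [Matrix.add_mulVec, dotProduct_add, map_add] at h4
  have h5 : lam ^ (t - 1) * lam = lam ^ t := by
    rw [← Real.rpow_add_one hlam0'.ne', sub_add_cancel]
  have h6 : RCLike.re (dotProduct (star ⇑v) ((A + B) *ᵥ ⇑v))
      = RCLike.re (dotProduct (star ⇑v) (A *ᵥ ⇑v))
        + RCLike.re (dotProduct (star ⇑v) (B *ᵥ ⇑v)) := by
    rw [Matrix.add_mulVec, dotProduct_add, map_add]
  refine le_trans hLHS ?_
  rw [hMv] at h6
  set ra := RCLike.re (dotProduct (star ⇑v) (A *ᵥ ⇑v)) with hra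
  set rb := RCLike.re (dotProduct (star ⇑v) (B *ᵥ ⇑v)) with hrb
  set ra' := RCLike.re (dotProduct (star ⇑v) (psdPow A hA.1 t *ᵥ ⇑v)) with hra'
  set rb' := RCLike.re (dotProduct (star ⇑v) (psdPow B hB.1 t *ᵥ ⇑v)) with hrb'
  calc lam ^ t = lam ^ (t - 1) * (ra + rb) := by rw [← h6, h5]
    _ = lam ^ (t - 1) * ra + lam ^ (t - 1) * rb := by ring
    _ ≤ ra' + rb' := add_le_add h1 h2
    _ ≤ ‖psdPow A hA.1 t + psdPow B hB.1 t‖ := h4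
end

section
/- For n×n complex matrices A and B, the largest singular value of the Schur product satisfies σ₁(A ∘ B) ≤ σ₁(A)·σ₁(B). -/
open scoped Matrix.Norms.L2Operator Kronecker

namespace SchurAux

open Matrix

variable {m p l : Type*} [Fintype m] [Fintype p] [Fintype l]
  [DecidableEq m] [DecidableEq p] [DecidableEq l]

lemma euclid_norm_sq (x : EuclideanSpace ℂ m) : ‖x‖ ^ 2 = ∑ i, ‖x i‖ ^ 2 := by
  rw [EuclideanSpace.norm_eq, Real.sq_sqrt (by positivity)]

lemma le_of_sq_le_sq {a b : ℝ} (ha : 0 ≤ a) (hb : 0 ≤ b) (h : a ^ 2 ≤ b ^ 2) : a ≤ b := by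
  have := Real.sqrt_le_sqrt h
  rwa [Real.sqrt_sq ha, Real.sqrt_sq hb] at this

lemma opNorm_le_of_sq (M : Matrix m p ℂ) {c : ℝ} (hc : 0 ≤ c)
    (h : ∀ x : p → ℂ, ∑ i, ‖(M *ᵥ x) i‖ ^ 2 ≤ c ^ 2 * ∑ j, ‖x j‖ ^ 2) :
    ‖M‖ ≤ c := by
  rw [Matrix.l2_opNorm_def]
  refine ContinuousLinearMap.opNorm_le_bound _ hc fun x => ?_
  refine le_of_sq_le_sq (norm_nonneg _) (mul_nonneg hc (norm_nonneg x)) ?_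
  have hx : ‖x‖ ^ 2 = ∑ j, ‖x j‖ ^ 2 := euclid_norm_sq x
  have hTx : ‖((toEuclideanLin (𝕜 := ℂ) (m := m) (n := p)).trans
        LinearMap.toContinuousLinearMap M) x‖ ^ 2
      = ∑ i, ‖(M *ᵥ (WithLp.equiv 2 (p → ℂ) x)) i‖ ^ 2 := euclid_norm_sq _
  have hkey : ∑ i, ‖(M *ᵥ (WithLp.equiv 2 (p → ℂ) x)) i‖ ^ 2 ≤ c ^ 2 * ∑ j, ‖x j‖ ^ 2 :=
    h (WithLp.equiv 2 (p → ℂ) x)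
  calc ‖((toEuclideanLin (𝕜 := ℂ) (m := m) (n := p)).trans
        LinearMap.toContinuousLinearMap M) x‖ ^ 2
      ≤ c ^ 2 * ∑ j, ‖x j‖ ^ 2 := hTx ▸ hkey
    _ = (c * ‖x‖) ^ 2 := by rw [mul_pow, hx]

lemma mulVec_sq_le (A : Matrix m p ℂ) (v : p → ℂ) :
    ∑ i, ‖(A *ᵥ v) i‖ ^ 2 ≤ ‖A‖ ^ 2 * ∑ j, ‖v j‖ ^ 2 := by
  have h : ‖(EuclideanSpace.equiv m ℂ).symm (A *ᵥ v)‖ ≤ ‖A‖ * ‖(WithLp.equiv 2 (p → ℂ)).symm v‖ :=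
    Matrix.l2_opNorm_mulVec A ((WithLp.equiv 2 (p → ℂ)).symm v)
  have h1 : ‖(EuclideanSpace.equiv m ℂ).symm (A *ᵥ v)‖ ^ 2 = ∑ i, ‖(A *ᵥ v) i‖ ^ 2 :=
    euclid_norm_sq _
  have h2 : ‖(WithLp.equiv 2 (p → ℂ)).symm v‖ ^ 2 = ∑ j, ‖v j‖ ^ 2 := euclid_norm_sq _
  calc ∑ i, ‖(A *ᵥ v) i‖ ^ 2 = ‖(EuclideanSpace.equiv m ℂ).symm (A *ᵥ v)‖ ^ 2 := h1.symm
    _ ≤ (‖A‖ * ‖(WithLp.equiv 2 (p → ℂ)).symm v‖) ^ 2 := by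
        refine pow_le_pow_left₀ (norm_nonneg _) h 2
    _ = ‖A‖ ^ 2 * ∑ j, ‖v j‖ ^ 2 := by rw [mul_pow, h2]

lemma norm_kron_one_le (A : Matrix m m ℂ) :
    ‖A ⊗ₖ (1 : Matrix p p ℂ)‖ ≤ ‖A‖ := by
  refine opNorm_le_of_sq _ (norm_nonneg A) fun v => ?_
  have h1 : ∀ (i : m) (j : p), ((A ⊗ₖ (1 : Matrix p p ℂ)) *ᵥ v) (i, j)
      = (A *ᵥ fun k => v (k, j)) i := by
    intro i j
    simp [Matrix.mulVec, dotProduct, Fintype.sum_prod_type,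
      Matrix.one_apply, mul_ite, ite_mul, mul_assoc]
  calc ∑ ij : m × p, ‖((A ⊗ₖ (1 : Matrix p p ℂ)) *ᵥ v) ij‖ ^ 2
      = ∑ j : p, ∑ i : m, ‖(A *ᵥ fun k => v (k, j)) i‖ ^ 2 := by
        rw [Fintype.sum_prod_type, Finset.sum_comm]
        simp only [h1]
    _ ≤ ∑ j : p, ‖A‖ ^ 2 * ∑ k : m, ‖v (k, j)‖ ^ 2 :=
        Finset.sum_le_sum fun j _ => mulVec_sq_le A _
    _ = ‖A‖ ^ 2 * ∑ ij : m × p, ‖v ij‖ ^ 2 := by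
        rw [← Finset.mul_sum, Fintype.sum_prod_type, Finset.sum_comm]

lemma norm_one_kron_le (B : Matrix p p ℂ) :
    ‖(1 : Matrix m m ℂ) ⊗ₖ B‖ ≤ ‖B‖ := by
  refine opNorm_le_of_sq _ (norm_nonneg B) fun v => ?_
  have h1 : ∀ (i : m) (j : p), (((1 : Matrix m m ℂ) ⊗ₖ B) *ᵥ v) (i, j)
      = (B *ᵥ fun k => v (i, k)) j := by
    intro i j
    simp [Matrix.mulVec, dotProduct, Fintype.sum_prod_type,
      Matrix.one_apply, mul_ite, ite_mul]
  calc ∑ ij : m × p, ‖(((1 : Matrix m m ℂ) ⊗ₖ B) *ᵥ v) ij‖ ^ 2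
      = ∑ i : m, ∑ j : p, ‖(B *ᵥ fun k => v (i, k)) j‖ ^ 2 := by
        rw [Fintype.sum_prod_type]
        simp only [h1]
    _ ≤ ∑ i : m, ‖B‖ ^ 2 * ∑ k : p, ‖v (i, k)‖ ^ 2 :=
        Finset.sum_le_sum fun i _ => mulVec_sq_le B _
    _ = ‖B‖ ^ 2 * ∑ ij : m × p, ‖v ij‖ ^ 2 := by
        rw [← Finset.mul_sum, Fintype.sum_prod_type]

lemma norm_submatrix_le (M : Matrix l l ℂ) (e : m → l) (he : Function.Injective e) :
    ‖M.submatrix e e‖ ≤ ‖M‖ := by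
  refine opNorm_le_of_sq _ (norm_nonneg M) fun x => ?_
  set x' : l → ℂ := Function.extend e x (0 : l → ℂ) with hx'
  have hxe : ∀ k, x' (e k) = x k := fun k => he.extend_apply x (0 : l → ℂ) k
  have hx0 : ∀ j, j ∉ Finset.image e Finset.univ → x' j = 0 := by
    intro j hj
    refine Function.extend_apply' x (0 : l → ℂ) j ?_
    rintro ⟨a, rfl⟩
    exact hj (Finset.mem_image.mpr ⟨a, Finset.mem_univ _, rfl⟩)
  have hmv : ∀ i, ((M.submatrix e e) *ᵥ x) i = (M *ᵥ x') (e i) := by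
    intro i
    simp only [Matrix.mulVec, dotProduct, Matrix.submatrix_apply]
    rw [← Finset.sum_subset (Finset.subset_univ (Finset.image e Finset.univ))
      (fun j _ hj => by rw [hx0 j hj, mul_zero]),
      Finset.sum_image (fun a _ b _ h => he h)]
    exact Finset.sum_congr rfl fun k _ => by rw [hxe]
  calc ∑ i, ‖((M.submatrix e e) *ᵥ x) i‖ ^ 2
      = ∑ j ∈ Finset.image e Finset.univ, ‖(M *ᵥ x') j‖ ^ 2 := by
        rw [Finset.sum_image (fun a _ b _ h => he h)]
        exact Finset.sum_congr rfl fun i _ => by rw [hmv]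
    _ ≤ ∑ j, ‖(M *ᵥ x') j‖ ^ 2 :=
        Finset.sum_le_sum_of_subset_of_nonneg (Finset.subset_univ _)
          (fun j _ _ => by positivity)
    _ ≤ ‖M‖ ^ 2 * ∑ j, ‖x' j‖ ^ 2 := mulVec_sq_le M x'
    _ = ‖M‖ ^ 2 * ∑ k, ‖x k‖ ^ 2 := by
        congr 1
        rw [← Finset.sum_subset (Finset.subset_univ (Finset.image e Finset.univ))
          (fun j _ hj => by rw [hx0 j hj]; simp),
          Finset.sum_image (fun a _ b _ h => he h)]
        exact Finset.sum_congr rfl fun k _ => by rw [hxe]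

end SchurAux

open scoped Matrix.Norms.L2Operator

/-- The largest singular value (operator norm) of the Schur product satisfies
`σ₁(A ∘ B) ≤ σ₁(A) · σ₁(B)`. -/
theorem schur_product_opNorm_le {n : ℕ} (A B : Matrix (Fin n) (Fin n) ℂ) :
    ‖Matrix.hadamard A B‖ ≤ ‖A‖ * ‖B‖ := by
  open scoped Kronecker in
  have hsub : Matrix.hadamard A B
      = (A ⊗ₖ B).submatrix (fun i : Fin n => (i, i)) (fun i : Fin n => (i, i)) := by
    ext i j
    simp [Matrix.hadamard]
  have hinj : Function.Injective (fun i : Fin n => ((i, i) : Fin n × Fin n)) :=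
    fun a b h => congrArg Prod.fst h
  have h1 : ‖Matrix.hadamard A B‖ ≤ ‖A ⊗ₖ B‖ := by
    rw [hsub]; exact SchurAux.norm_submatrix_le _ _ hinj
  have h2 : (A ⊗ₖ B) = (A ⊗ₖ (1 : Matrix (Fin n) (Fin n) ℂ))
      * ((1 : Matrix (Fin n) (Fin n) ℂ) ⊗ₖ B) := by
    rw [← Matrix.mul_kronecker_mul, Matrix.mul_one, Matrix.one_mul]
  calc ‖Matrix.hadamard A B‖ ≤ ‖A ⊗ₖ B‖ := h1
    _ ≤ ‖A ⊗ₖ (1 : Matrix (Fin n) (Fin n) ℂ)‖ * ‖(1 : Matrix (Fin n) (Fin n) ℂ) ⊗ₖ B‖ := by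
        rw [h2]; exact Matrix.l2_opNorm_mul _ _
    _ ≤ ‖A‖ * ‖B‖ :=
        mul_le_mul (SchurAux.norm_kron_one_le A) (SchurAux.norm_one_kron_le B)
          (norm_nonneg _) (norm_nonneg _)
end

section
/- For positive definite n×n matrices A and B, det(A ∘ B) ≥ det(A B) = det(A) det(B). -/
open scoped ComplexOrder
open Matrix
open MatrixOrder
variable {ι : Type*} [Fintype ι] [DecidableEq ι]
set_option linter.unusedSectionVars false

lemma one_le_det_one_add {R : Matrix ι ι ℂ} (hR : R.PosSemidef) : 1 ≤ (1 + R).det := by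
  set U : Matrix ι ι ℂ := (hR.1.eigenvectorUnitary : Matrix ι ι ℂ) with hUdef
  have hU : U * star U = 1 := (Matrix.mem_unitaryGroup_iff).mp hR.1.eigenvectorUnitary.2
  have h1 : (1 : Matrix ι ι ℂ) + R
      = U * (1 + diagonal (RCLike.ofReal ∘ hR.1.eigenvalues)) * star U := by
    rw [mul_add, add_mul, mul_one, hU]
    conv_lhs => rw [hR.1.spectral_theorem, Unitary.conjStarAlgAut_apply]
  rw [h1, det_mul_right_comm, hU, one_mul]
  have : (1 : Matrix ι ι ℂ) + diagonal (RCLike.ofReal ∘ hR.1.eigenvalues)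
      = diagonal (fun i => 1 + (hR.1.eigenvalues i : ℂ)) := by
    rw [← diagonal_one, diagonal_add]
    rfl
  rw [this, det_diagonal]
  calc (1:ℂ) = ∏ _i : ι, 1 := by simp
  _ ≤ _ := by
    apply Finset.prod_le_prod
    · intro i _; exact zero_le_one
    · intro i _
      have := hR.eigenvalues_nonneg i
      simp only [le_add_iff_nonneg_right]
      exact_mod_cast this

lemma det_le_det_add {N Q : Matrix ι ι ℂ} (hN : N.PosDef) (hQ : Q.PosSemidef) :
    N.det ≤ (N + Q).det := by
  set C := CFC.sqrt N with hC
  have hCsq : C * C = N := CFC.sqrt_mul_sqrt_self N hN.posSemidef.nonneg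
  have hCherm : C.IsHermitian := (nonneg_iff_posSemidef.mp (CFC.sqrt_nonneg N)).1
  have hCdet : C.det ≠ 0 := by
    intro h
    have : N.det = 0 := by rw [← hCsq, det_mul, h, mul_zero]
    exact hN.det_pos.ne' this
  have : Invertible C := invertibleOfIsUnitDet _ (Ne.isUnit hCdet)
  set R := C⁻¹ * Q * C⁻¹ᴴ with hR
  have hRpsd : R.PosSemidef := hQ.mul_mul_conjTranspose_same C⁻¹
  have key : N + Q = C * (1 + R) * C := by
    rw [mul_add, add_mul, mul_one, hCsq, hR, hCherm.inv.eq]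
    congr 1
    rw [← mul_assoc, ← mul_assoc]
    rw [Matrix.mul_inv_of_invertible, one_mul, mul_assoc, Matrix.inv_mul_of_invertible, mul_one]
  calc N.det = N.det * 1 := (mul_one _).symm
  _ ≤ N.det * (1 + R).det :=
      mul_le_mul_of_nonneg_left (one_le_det_one_add hRpsd) hN.det_pos.le
  _ = (N + Q).det := by
      have hdet : C.det * C.det = N.det := by rw [← det_mul, hCsq]
      rw [key, det_mul, det_mul, ← hdet]; ring

lemma posdef_diag_pos {B : Matrix ι ι ℂ} (hB : B.PosDef) (i : ι) : 0 < B i i := by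
  have := hB.dotProduct_mulVec_pos (x := Pi.single i (1:ℂ)) (fun h => one_ne_zero (α := ℂ) (by simpa using congrFun h i))
  simpa [dotProduct, mulVec, Pi.single_apply, Finset.sum_ite_eq] using this

lemma schur_product_posDef {A B : Matrix ι ι ℂ} (hA : A.PosDef) (hB : B.PosDef) :
    (A.hadamard B).PosDef := by
  obtain ⟨C, hC⟩ : ∃ C : Matrix ι ι ℂ, B = Cᴴ * C :=
    CStarAlgebra.nonneg_iff_eq_star_mul_self.mp hB.posSemidef.nonneg
  refine PosDef.of_dotProduct_mulVec_pos ?_ ?_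
  · rw [Matrix.IsHermitian]
    ext i j
    simp only [conjTranspose_apply, hadamard_apply, star_mul']
    rw [mul_comm, hA.1.apply, hB.1.apply]
    ring
  · intro x hx
    set y : ι → ι → ℂ := fun k j => C k j * x j with hy
    have key : star x ⬝ᵥ ((A.hadamard B) *ᵥ x) = ∑ k, star (y k) ⬝ᵥ (A *ᵥ y k) := by
      simp only [dotProduct, mulVec, hadamard_apply, hC, Matrix.mul_apply, conjTranspose_apply,
        Finset.mul_sum, Finset.sum_mul, Pi.star_apply, hy, star_mul']
      have swap : ∀ F : ι → ι → ι → ℂ,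
          (∑ i, ∑ j, ∑ k, F i j k) = ∑ k, ∑ i, ∑ j, F i j k := fun F => by
        rw [show (∑ i, ∑ j, ∑ k, F i j k) = ∑ i, ∑ k, ∑ j, F i j k from
          Finset.sum_congr rfl fun i _ => Finset.sum_comm]
        exact Finset.sum_comm
      rw [swap]
      apply Finset.sum_congr rfl
      intro k _
      apply Finset.sum_congr rfl
      intro i _
      apply Finset.sum_congr rfl
      intro j _
      ring
    rw [key]
    -- find an index with y k ≠ 0
    obtain ⟨i, hi⟩ := Function.ne_iff.mp hx
    have hBii : (0:ℂ) < B i i := posdef_diag_pos hB i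
    have : ∃ k, C k i ≠ 0 := by
      by_contra h
      push_neg at h
      have : B i i = 0 := by
        rw [hC]
        simp [Matrix.mul_apply, conjTranspose_apply, h]
      rw [this] at hBii; exact lt_irrefl _ hBii
    obtain ⟨k, hk⟩ := this
    have hyk : y k ≠ 0 := by
      intro h
      have := congrFun h i
      simp only [hy, Pi.zero_apply] at this
      exact hi (by
        rcases mul_eq_zero.mp this with h1 | h2
        · exact absurd h1 hk
        · exact h2)
    refine Finset.sum_pos' (fun k _ => hA.posSemidef.dotProduct_mulVec_nonneg (y k)) ⟨k, Finset.mem_univ k, hA.dotProduct_mulVec_pos hyk⟩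

lemma posDef_of_det_ne_zero' {M : Matrix ι ι ℂ} (hM : M.PosSemidef) (h : M.det ≠ 0) :
    M.PosDef := by
  obtain ⟨C, rfl⟩ : ∃ C : Matrix ι ι ℂ, M = Cᴴ * C :=
    CStarAlgebra.nonneg_iff_eq_star_mul_self.mp hM.nonneg
  refine PosDef.of_dotProduct_mulVec_pos hM.1 (fun x hx => ?_)
  have hform : star x ⬝ᵥ ((Cᴴ * C) *ᵥ x) = star (C *ᵥ x) ⬝ᵥ (C *ᵥ x) := by
    rw [← mulVec_mulVec, dotProduct_mulVec, ← star_mulVec]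
  rw [hform]
  rw [dotProduct_star_self_pos_iff]
  intro h0
  have hinj : Function.Injective ((Cᴴ * C).mulVec) :=
    mulVec_injective_iff_isUnit.mpr ((isUnit_iff_isUnit_det _).mpr (Ne.isUnit h))
  apply hx
  have : (Cᴴ * C) *ᵥ x = (Cᴴ * C) *ᵥ 0 := by
    rw [mulVec_zero, ← mulVec_mulVec, h0, mulVec_zero]
  exact hinj this

lemma posDef_submatrix_equiv {κ : Type*} [Fintype κ] [DecidableEq κ]
    {M : Matrix ι ι ℂ} (hM : M.PosDef) (e : κ ≃ ι) : (M.submatrix e e).PosDef :=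
  posDef_of_det_ne_zero' (hM.posSemidef.submatrix e)
    (by rw [det_submatrix_equiv_self]; exact hM.det_pos.ne')

lemma posSemidef_smul {M : Matrix ι ι ℂ} (hM : M.PosSemidef) {c : ℂ} (hc : 0 ≤ c) :
    (c • M).PosSemidef := by
  have hcr : star c = c := by
    rw [Complex.star_def, Complex.conj_eq_iff_im]
    simpa using (Complex.le_def.mp hc).2.symm
  refine PosSemidef.of_dotProduct_mulVec_nonneg ?_ ?_
  · rw [IsHermitian, conjTranspose_smul, hcr, hM.1.eq]
  · intro x
    rw [smul_mulVec, dotProduct_smul, smul_eq_mul]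
    exact mul_nonneg hc (hM.dotProduct_mulVec_nonneg x)

section blocks
variable {A : Matrix (Fin 1 ⊕ ι) (Fin 1 ⊕ ι) ℂ}

lemma toBlocks₂₁_eq (hA : A.IsHermitian) : A.toBlocks₂₁ = A.toBlocks₁₂ᴴ := by
  ext i j
  exact (hA.apply _ _).symm

lemma posDef_toBlocks₁₁ (hA : A.PosDef) : A.toBlocks₁₁.PosDef := by
  refine PosDef.of_dotProduct_mulVec_pos ?_ (fun x hx => ?_)
  · ext i j; exact hA.1.apply _ _
  · have h := hA.dotProduct_mulVec_pos (x := Sum.elim x (0 : ι → ℂ)) (by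
      intro h
      exact hx (funext fun i => by simpa using congrFun h (Sum.inl i)))
    have : star (Sum.elim x (0 : ι → ℂ)) = Sum.elim (star x) (0 : ι → ℂ) := by
      funext p; cases p <;> simp
    rw [← fromBlocks_toBlocks A, this, fromBlocks_mulVec, sumElim_dotProduct_sumElim] at h
    simpa using h
  
lemma posDef_toBlocks₂₂ (hA : A.PosDef) : A.toBlocks₂₂.PosDef := by
  refine PosDef.of_dotProduct_mulVec_pos ?_ (fun x hx => ?_)
  · ext i j; exact hA.1.apply _ _
  · have h := hA.dotProduct_mulVec_pos (x := Sum.elim (0 : Fin 1 → ℂ) x) (by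
      intro h
      exact hx (funext fun i => by simpa using congrFun h (Sum.inr i)))
    have : star (Sum.elim (0 : Fin 1 → ℂ) x) = Sum.elim (0 : Fin 1 → ℂ) (star x) := by
      funext p; cases p <;> simp
    rw [← fromBlocks_toBlocks A, this, fromBlocks_mulVec, sumElim_dotProduct_sumElim] at h
    simpa using h

end blocks

section blocks2
set_option linter.unusedSectionVars false
variable {M : Matrix (Fin 1 ⊕ ι) (Fin 1 ⊕ ι) ℂ}

lemma det_toBlocks (M : Matrix (Fin 1 ⊕ ι) (Fin 1 ⊕ ι) ℂ) [Invertible M.toBlocks₁₁] :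
    M.det = M.toBlocks₁₁.det *
      (M.toBlocks₂₂ - M.toBlocks₂₁ * M.toBlocks₁₁⁻¹ * M.toBlocks₁₂).det := by
  conv_lhs => rw [← fromBlocks_toBlocks M]
  rw [det_fromBlocks₁₁, invOf_eq_nonsing_inv]

lemma schur_posDef (hM : M.PosDef) [Invertible M.toBlocks₁₁] :
    (M.toBlocks₂₂ - M.toBlocks₂₁ * M.toBlocks₁₁⁻¹ * M.toBlocks₁₂).PosDef := by
  have h21 : M.toBlocks₂₁ = M.toBlocks₁₂ᴴ := toBlocks₂₁_eq hM.1
  have hpsd : (M.toBlocks₂₂ - M.toBlocks₂₁ * M.toBlocks₁₁⁻¹ * M.toBlocks₁₂).PosSemidef := by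
    rw [h21]
    refine (PosDef.fromBlocks₁₁ M.toBlocks₁₂ M.toBlocks₂₂ (posDef_toBlocks₁₁ hM)).mp ?_
    rw [← h21, fromBlocks_toBlocks]
    exact hM.posSemidef
  refine posDef_of_det_ne_zero' hpsd ?_
  intro h0
  have := det_toBlocks M
  rw [h0, mul_zero] at this
  exact hM.det_pos.ne' this

end blocks2

lemma posdef_diag_pos' {B : Matrix ι ι ℂ} (hB : B.PosDef) (i : ι) : 0 < B i i := by
  have := hB.dotProduct_mulVec_pos (x := Pi.single i (1:ℂ)) (fun h => one_ne_zero (α := ℂ) (by simpa using congrFun h i))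
  simpa [dotProduct, mulVec, Pi.single_apply, Finset.sum_ite_eq] using this

lemma hadamard_ineq : ∀ n (A : Matrix (Fin n) (Fin n) ℂ), A.PosDef → A.det ≤ ∏ i, A i i := by
  intro n
  induction n with
  | zero => intro A _; simp [det_fin_zero]
  | succ n IH =>
    intro A hA
    set e : Fin 1 ⊕ Fin n ≃ Fin (n+1) := finSumFinEquiv.trans (finCongr (Nat.add_comm 1 n))
    set M := A.submatrix e e with hM
    have hMpd : M.PosDef := posDef_submatrix_equiv hA e
    have h11 : M.toBlocks₁₁.PosDef := posDef_toBlocks₁₁ hMpd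
    have h22 : M.toBlocks₂₂.PosDef := posDef_toBlocks₂₂ hMpd
    haveI : Invertible M.toBlocks₁₁ := invertibleOfIsUnitDet _ h11.det_pos.ne'.isUnit
    set S := M.toBlocks₂₂ - M.toBlocks₂₁ * M.toBlocks₁₁⁻¹ * M.toBlocks₁₂ with hS
    have hSpd : S.PosDef := schur_posDef hMpd
    have hX : (M.toBlocks₂₁ * M.toBlocks₁₁⁻¹ * M.toBlocks₁₂).PosSemidef := by
      rw [toBlocks₂₁_eq hMpd.1]
      exact h11.inv.posSemidef.conjTranspose_mul_mul_same M.toBlocks₁₂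
    have hsum : S + M.toBlocks₂₁ * M.toBlocks₁₁⁻¹ * M.toBlocks₁₂ = M.toBlocks₂₂ :=
      sub_add_cancel _ _
    have hdetA : A.det = M.det := (det_submatrix_equiv_self e A).symm
    have hprod : ∏ i, A i i = M (Sum.inl 0) (Sum.inl 0) * ∏ i, M.toBlocks₂₂ i i := by
      rw [← Equiv.prod_comp e (fun j => A j j)]
      rw [Fintype.prod_sum_type]
      simp [Fin.prod_univ_one, hM, toBlocks₂₂]
    have hdet11 : M.toBlocks₁₁.det = M (Sum.inl 0) (Sum.inl 0) := det_fin_one _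
    calc A.det = M.toBlocks₁₁.det * S.det := by rw [hdetA, det_toBlocks M]
    _ ≤ M.toBlocks₁₁.det * M.toBlocks₂₂.det := by
        refine mul_le_mul_of_nonneg_left ?_ h11.det_pos.le
        calc S.det ≤ (S + M.toBlocks₂₁ * M.toBlocks₁₁⁻¹ * M.toBlocks₁₂).det :=
              det_le_det_add hSpd hX
        _ = M.toBlocks₂₂.det := by rw [hsum]
    _ ≤ M.toBlocks₁₁.det * ∏ i, M.toBlocks₂₂ i i :=
        mul_le_mul_of_nonneg_left (IH _ h22) h11.det_pos.le
    _ = ∏ i, A i i := by rw [hprod, hdet11]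

lemma oppenheim : ∀ n (A B : Matrix (Fin n) (Fin n) ℂ), A.PosDef → B.PosDef →
    (∏ i, A i i) * B.det ≤ (A.hadamard B).det := by
  intro n
  induction n with
  | zero => intro A B _ _; simp [det_fin_zero]
  | succ n IH =>
    intro A₀ B₀ hA₀ hB₀
    set e : Fin 1 ⊕ Fin n ≃ Fin (n+1) := finSumFinEquiv.trans (finCongr (Nat.add_comm 1 n))
    set M := A₀.submatrix e e with hMdef
    set N := B₀.submatrix e e with hNdef
    have hM : M.PosDef := posDef_submatrix_equiv hA₀ e
    have hN : N.PosDef := posDef_submatrix_equiv hB₀ e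
    have hHsub : (A₀.hadamard B₀).submatrix e e = M.hadamard N := by
      rfl
    -- transfer goal
    rw [← det_submatrix_equiv_self e (A₀.hadamard B₀), hHsub,
        ← det_submatrix_equiv_self e B₀, ← Equiv.prod_comp e (fun j => A₀ j j)]
    show (∏ p, M p p) * N.det ≤ (M.hadamard N).det
    -- setup
    set b11 : ℂ := N (Sum.inl 0) (Sum.inl 0) with hb11def
    have hb11 : 0 < b11 := posdef_diag_pos hN _
    have hb11c : star b11 = b11 := hN.1.apply _ _
    have hb11r : b11 = (b11.re : ℂ) := Complex.ext rfl (by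
      have := (Complex.le_def.mp hb11.le).2; simpa using this.symm)
    have hb11inv_nonneg : 0 ≤ b11⁻¹ := by
      rw [hb11r, ← Complex.ofReal_inv]
      rw [Complex.zero_le_real]
      have hre : 0 < b11.re := by simpa using (Complex.lt_def.mp hb11).1
      positivity
    have h11N : N.toBlocks₁₁.PosDef := posDef_toBlocks₁₁ hN
    have h22M : M.toBlocks₂₂.PosDef := posDef_toBlocks₂₂ hM
    haveI : Invertible N.toBlocks₁₁ := invertibleOfIsUnitDet _ h11N.det_pos.ne'.isUnit
    set S := N.toBlocks₂₂ - N.toBlocks₂₁ * N.toBlocks₁₁⁻¹ * N.toBlocks₁₂ with hSdef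
    have hSpd : S.PosDef := schur_posDef hN
    have hdetN : N.det = b11 * S.det := by
      rw [det_toBlocks N, det_fin_one]; rfl
    set w : Fin 1 ⊕ Fin n → ℂ := fun p => N p (Sum.inl 0) with hwdef
    set E : Matrix _ _ ℂ := diagonal w * M * (diagonal w)ᴴ with hEdef
    have hEpsd : E.PosSemidef := hM.posSemidef.mul_mul_conjTranspose_same (diagonal w)
    set E' := b11⁻¹ • E with hE'def
    have hE'psd : E'.PosSemidef := posSemidef_smul hEpsd hb11inv_nonneg
    have hEapp : ∀ p q, E' p q = b11⁻¹ * (w p * M p q * star (w q)) := by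
      intro p q
      rw [hE'def, Matrix.smul_apply, hEdef, diagonal_conjTranspose, mul_diagonal, diagonal_mul]
      simp [smul_eq_mul]
    have hN12 : ∀ j, N (Sum.inl 0) (Sum.inr j) = star (N (Sum.inr j) (Sum.inl 0)) :=
      fun j => (hN.1.apply _ _).symm
    have hinv : N.toBlocks₁₁⁻¹ 0 0 = b11⁻¹ := by
      rw [inv_def, adjugate_fin_one, det_fin_one]
      simp [Ring.inverse_eq_inv']
      rfl
    have hSapp : ∀ i j, S i j = N (Sum.inr i) (Sum.inr j)
        - N (Sum.inr i) (Sum.inl 0) * b11⁻¹ * star (N (Sum.inr j) (Sum.inl 0)) := by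
      intro i j
      rw [hSdef, Matrix.sub_apply, mul_apply]
      simp only [Finset.univ_unique, Finset.sum_singleton, mul_apply, Fin.default_eq_zero, hinv]
      rw [show N.toBlocks₁₂ 0 j = star (N (Sum.inr j) (Sum.inl 0)) from hN12 j]
      rfl
    set K := M.toBlocks₂₂.hadamard S with hKdef
    have hdecomp : M.hadamard N = E' + fromBlocks 0 0 0 K := by
      ext p q
      rw [Matrix.add_apply, hEapp]
      cases p with
      | inl a =>
        have ha : a = 0 := Subsingleton.elim a 0
        subst ha
        cases q with
        | inl b =>
          have hb : b = 0 := Subsingleton.elim b 0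
          subst hb
          simp only [hadamard_apply, fromBlocks_apply₁₁, Matrix.zero_apply, add_zero]
          have hw : w (Sum.inl 0) = b11 := rfl
          rw [hw, hb11c]
          field_simp
          try ring
        | inr j =>
          simp only [hadamard_apply, fromBlocks_apply₁₂, Matrix.zero_apply, add_zero]
          have hw : w (Sum.inl 0) = b11 := rfl
          rw [hw, show star (w (Sum.inr j)) = N (Sum.inl 0) (Sum.inr j) from (hN12 j).symm]
          field_simp
          try ring
      | inr i =>
        cases q with
        | inl b =>
          have hb : b = 0 := Subsingleton.elim b 0
          subst hb
          simp only [hadamard_apply, fromBlocks_apply₂₁, Matrix.zero_apply, add_zero]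
          have hw : star (w (Sum.inl 0)) = b11 := hb11c
          rw [hw]
          have : N (Sum.inr i) (Sum.inl 0) = w (Sum.inr i) := rfl
          rw [this]
          field_simp
          try ring
        | inr j =>
          simp only [hadamard_apply, fromBlocks_apply₂₂]
          have hK : K i j = M (Sum.inr i) (Sum.inr j) * S i j := rfl
          rw [hK, hSapp i j]
          have hw1 : w (Sum.inr i) = N (Sum.inr i) (Sum.inl 0) := rfl
          have hw2 : star (w (Sum.inr j)) = star (N (Sum.inr j) (Sum.inl 0)) := rfl
          rw [hw1, hw2]
          have hM22 : M.toBlocks₂₂ i j = M (Sum.inr i) (Sum.inr j) := rfl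
          ring
    set G := M.hadamard N with hGdef
    have hG : G.PosDef := schur_product_posDef hM hN
    have h11G : G.toBlocks₁₁.PosDef := posDef_toBlocks₁₁ hG
    haveI instG : Invertible G.toBlocks₁₁ := invertibleOfIsUnitDet _ h11G.det_pos.ne'.isUnit
    have hG11 : G.toBlocks₁₁ = E'.toBlocks₁₁ := by
      ext i j
      show G (Sum.inl i) (Sum.inl j) = E' (Sum.inl i) (Sum.inl j)
      rw [hdecomp, Matrix.add_apply, fromBlocks_apply₁₁]
      simp
    have hG12 : G.toBlocks₁₂ = E'.toBlocks₁₂ := by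
      ext i j
      show G (Sum.inl i) (Sum.inr j) = E' (Sum.inl i) (Sum.inr j)
      rw [hdecomp, Matrix.add_apply, fromBlocks_apply₁₂]
      simp
    have hG21 : G.toBlocks₂₁ = E'.toBlocks₂₁ := by
      ext i j
      show G (Sum.inr i) (Sum.inl j) = E' (Sum.inr i) (Sum.inl j)
      rw [hdecomp, Matrix.add_apply, fromBlocks_apply₂₁]
      simp
    have hG22 : G.toBlocks₂₂ = E'.toBlocks₂₂ + K := by
      ext i j
      show G (Sum.inr i) (Sum.inr j) = E' (Sum.inr i) (Sum.inr j) + K i j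
      rw [hdecomp, Matrix.add_apply, fromBlocks_apply₂₂]
    haveI instE : Invertible E'.toBlocks₁₁ := hG11 ▸ instG
    have hP : (E'.toBlocks₂₂ - E'.toBlocks₂₁ * E'.toBlocks₁₁⁻¹ * E'.toBlocks₁₂).PosSemidef := by
      rw [toBlocks₂₁_eq hE'psd.1]
      refine (PosDef.fromBlocks₁₁ _ _ ?_).mp ?_
      · rw [← hG11]; exact h11G
      · rw [← toBlocks₂₁_eq hE'psd.1, fromBlocks_toBlocks]
        exact hE'psd
    have hT : G.toBlocks₂₂ - G.toBlocks₂₁ * G.toBlocks₁₁⁻¹ * G.toBlocks₁₂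
        = K + (E'.toBlocks₂₂ - E'.toBlocks₂₁ * E'.toBlocks₁₁⁻¹ * E'.toBlocks₁₂) := by
      rw [hG11, hG12, hG21, hG22]
      abel
    have hG11det : G.toBlocks₁₁.det = M (Sum.inl 0) (Sum.inl 0) * b11 := by
      rw [det_fin_one]; rfl
    have ha11 : 0 < M (Sum.inl 0) (Sum.inl 0) := posdef_diag_pos hM _
    have hKpd : K.PosDef := schur_product_posDef h22M hSpd
    have hprod : (∏ p, M p p) = M (Sum.inl 0) (Sum.inl 0) * ∏ i, M.toBlocks₂₂ i i := by
      rw [Fintype.prod_sum_type]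
      congr 1
      exact Fin.prod_univ_one _
    have hpos : (0:ℂ) < M (Sum.inl 0) (Sum.inl 0) * b11 := mul_pos ha11 hb11
    calc (∏ p, M p p) * N.det
        = (M (Sum.inl 0) (Sum.inl 0) * b11) * ((∏ i, M.toBlocks₂₂ i i) * S.det) := by
          rw [hprod, hdetN]; ring
      _ ≤ (M (Sum.inl 0) (Sum.inl 0) * b11) * K.det :=
          mul_le_mul_of_nonneg_left (IH _ _ h22M hSpd) hpos.le
      _ ≤ (M (Sum.inl 0) (Sum.inl 0) * b11) *
            (K + (E'.toBlocks₂₂ - E'.toBlocks₂₁ * E'.toBlocks₁₁⁻¹ * E'.toBlocks₁₂)).det :=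
          mul_le_mul_of_nonneg_left (det_le_det_add hKpd hP) hpos.le
      _ = G.det := by rw [det_toBlocks G, hG11det, hT]


/-- For positive definite matrices `A` and `B`, `det (A ∘ B) ≥ det (A B) = det A · det B`,
where `∘` is the Schur (entrywise) product and `≤` is the order on `ℂ`. -/
theorem det_hadamard_ge_det_mul {n : ℕ} (A B : Matrix (Fin n) (Fin n) ℂ)
    (hA : A.PosDef) (hB : B.PosDef) :
    (A * B).det ≤ (Matrix.hadamard A B).det ∧ (A * B).det = A.det * B.det := by
  have hmul : (A * B).det = A.det * B.det := det_mul A B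
  refine ⟨?_, hmul⟩
  calc (A * B).det = A.det * B.det := hmul
    _ ≤ (∏ i, A i i) * B.det :=
        mul_le_mul_of_nonneg_right (hadamard_ineq n A hA) hB.det_pos.le
    _ ≤ (A.hadamard B).det := oppenheim n A B hA hB
end
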